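/- Let G and H be finite simple graphs and let g, g' be vertices of G and h, h' be vertices of H with g ≠ g' and h ≠ h'. Then in the Cartesian product G □ H, the stress interval S((g,h),(g',h')) is contained in {(g,h),(g',h')}. -/

import Mathlib

/-- The interval `I(u,v)`: vertices lying on some shortest `u,v`-path. -/
def SimpleGraph.interval {V : Type*} (G : SimpleGraph V) (u v : V) : Set V :=
  {x | ∃ p : G.Walk u v, p.IsPath ∧ p.length = G.dist u v ∧ x ∈ p.support}

/-- The stress interval `S(u,v)`: vertices lying on every shortest `u,v`-path
(empty if `u` and `v` are in different components). -/
def SimpleGraph.stressInterval {V : Type*} (G : SimpleGraph V) (u v : V) : Set V :=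
  {x | G.Reachable u v ∧
    ∀ p : G.Walk u v, p.IsPath → p.length = G.dist u v → x ∈ p.support}

/-- A set of vertices is stress convex if it contains the stress interval
between any two of its elements. -/
def SimpleGraph.IsStressConvex {V : Type*} (G : SimpleGraph V) (U : Set V) : Prop :=
  ∀ ⦃u⦄, u ∈ U → ∀ ⦃v⦄, v ∈ U → G.stressInterval u v ⊆ U

open SimpleGraph

private lemma dist_le_succ_of_adj' {V : Type*} {G : SimpleGraph V} {a b c : V}
    (h : G.Adj a b) : G.dist a c ≤ G.dist b c + 1 := by
  by_cases hr : G.Reachable b c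
  · obtain ⟨p, hp⟩ := hr.exists_walk_length_eq_dist
    calc G.dist a c ≤ (Walk.cons h p).length := G.dist_le _
    _ = G.dist b c + 1 := by simp [hp, Nat.add_comm]
  · have hr' : ¬ G.Reachable a c := fun hac => hr ((h.reachable.symm).trans hac)
    simp [G.dist_eq_zero_of_not_reachable hr, G.dist_eq_zero_of_not_reachable hr']

private lemma sum_dist_le_walk_length' {V W : Type*} {G : SimpleGraph V} {H : SimpleGraph W}
    {x y : V × W} (w : (G.boxProd H).Walk x y) :
    G.dist x.1 y.1 + H.dist x.2 y.2 ≤ w.length := by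
  induction w with
  | nil => simp
  | @cons a b c hab w ih =>
    rcases hab with ⟨hG, h2⟩ | ⟨hH, h1⟩
    · calc G.dist a.1 c.1 + H.dist a.2 c.2
          ≤ (G.dist b.1 c.1 + 1) + H.dist b.2 c.2 := by
            have := dist_le_succ_of_adj' (c := c.1) hG
            rw [h2]; omega
      _ ≤ (w.length + 1) := by omega
      _ = (Walk.cons (Or.inl ⟨hG, h2⟩ : (G.boxProd H).Adj a b) w).length := by rfl
    · calc G.dist a.1 c.1 + H.dist a.2 c.2
          ≤ G.dist b.1 c.1 + (H.dist b.2 c.2 + 1) := by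
            have := dist_le_succ_of_adj' (c := c.2) hH
            rw [h1]; omega
      _ ≤ (w.length + 1) := by omega
      _ = (Walk.cons (Or.inr ⟨hH, h1⟩ : (G.boxProd H).Adj a b) w).length := by rfl

/-- in a Cartesian (box) product, the stress interval between vertices
differing in both coordinates is contained in its endpoints. -/
theorem stressInterval_boxProd_subset {V W : Type*} [Fintype V] [Fintype W]
    (G : SimpleGraph V) (H : SimpleGraph W) (g g' : V) (h h' : W)
    (hg : g ≠ g') (hh : h ≠ h') :
    (G.boxProd H).stressInterval (g, h) (g', h') ⊆ {(g, h), (g', h')} := by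
  classical
  rintro x ⟨hr, hall⟩
  have hrG : G.Reachable g g' := by
    obtain ⟨w⟩ := hr; exact ⟨w.ofBoxProdLeft⟩
  have hrH : H.Reachable h h' := by
    obtain ⟨w⟩ := hr; exact ⟨w.ofBoxProdRight⟩
  obtain ⟨P, hPp, hPl⟩ := hrG.exists_path_of_dist
  obtain ⟨Q, hQp, hQl⟩ := hrH.exists_path_of_dist
  set W1 : (G.boxProd H).Walk (g, h) (g', h') :=
    (P.boxProdLeft H h).append (Q.boxProdRight G g') with hW1
  set W2 : (G.boxProd H).Walk (g, h) (g', h') :=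
    (Q.boxProdRight G g).append (P.boxProdLeft H h') with hW2
  have hlen1 : W1.length = G.dist g g' + H.dist h h' := by
    rw [hW1, Walk.length_append,
      show (P.boxProdLeft H h).length = P.length from Walk.length_map _ _,
      show (Q.boxProdRight G g').length = Q.length from Walk.length_map _ _, hPl, hQl]
  have hlen2 : W2.length = G.dist g g' + H.dist h h' := by
    rw [hW2, Walk.length_append,
      show (Q.boxProdRight G g).length = Q.length from Walk.length_map _ _,
      show (P.boxProdLeft H h').length = P.length from Walk.length_map _ _, hPl, hQl,
      Nat.add_comm]
  have hd : (G.boxProd H).dist (g, h) (g', h') = G.dist g g' + H.dist h h' := by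
    refine le_antisymm (hlen1 ▸ (G.boxProd H).dist_le W1) ?_
    obtain ⟨w, hw⟩ := hr.exists_walk_length_eq_dist
    rw [← hw]
    exact sum_dist_le_walk_length' w
  have hx1 : x ∈ W1.support :=
    hall W1 (W1.isPath_of_length_eq_dist (hlen1.trans hd.symm)) (hlen1.trans hd.symm)
  have hx2 : x ∈ W2.support :=
    hall W2 (W2.isPath_of_length_eq_dist (hlen2.trans hd.symm)) (hlen2.trans hd.symm)
  have e1 : x.2 = h ∨ x.1 = g' := by
    rw [hW1, Walk.mem_support_append_iff] at hx1
    rcases hx1 with hA | hB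
    · left
      simp only [SimpleGraph.Walk.boxProdLeft] at hA
      erw [Walk.support_map, List.mem_map] at hA
      obtain ⟨a, -, ha⟩ := hA
      exact (congrArg Prod.snd ha.symm)
    · right
      simp only [SimpleGraph.Walk.boxProdRight] at hB
      erw [Walk.support_map, List.mem_map] at hB
      obtain ⟨b, -, hb⟩ := hB
      exact (congrArg Prod.fst hb.symm)
  have e2 : x.1 = g ∨ x.2 = h' := by
    rw [hW2, Walk.mem_support_append_iff] at hx2
    rcases hx2 with hA | hB
    · left
      simp only [SimpleGraph.Walk.boxProdRight] at hA
      erw [Walk.support_map, List.mem_map] at hA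
      obtain ⟨b, -, hb⟩ := hA
      exact (congrArg Prod.fst hb.symm)
    · right
      simp only [SimpleGraph.Walk.boxProdLeft] at hB
      erw [Walk.support_map, List.mem_map] at hB
      obtain ⟨a, -, ha⟩ := hB
      exact (congrArg Prod.snd ha.symm)
  rcases e1 with e1 | e1 <;> rcases e2 with e2 | e2
  · left; exact Prod.ext e2 e1
  · exact absurd (e1.symm.trans e2) hh
  · exact absurd (e2.symm.trans e1) hg
  · right; exact Prod.ext e1 e2
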